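/- If G is a graph satisfying the Erdős–Faber–Lovász hypothesis (G is the union of n complete graphs A_1, …, A_n, each on exactly n vertices, with every pair of the complete graphs sharing at most one common vertex), and for every i (1 ≤ i ≤ n) the complete graph A_i contains at most √n vertices of clique degree greater than 1, then G has a proper vertex coloring with n colors (the chromatic number of G is at most n). -/

import Mathlib

open Finset

section EFLAux

variable {V : Type*}

/-- Greedy coloring: color of the `k`-th vertex in the enumeration `f`. -/
noncomputable def eflGreedy (G : SimpleGraph V) [DecidableRel G.Adj] (f : ℕ → V) (n : ℕ)
    (k : ℕ) : ℕ :=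
  if h : ((Finset.range n) \ (((Finset.range k).filter (fun j => G.Adj (f j) (f k))).image
      (fun j => if _h : j < k then eflGreedy G f n j else 0))).Nonempty
  then ((Finset.range n) \ (((Finset.range k).filter (fun j => G.Adj (f j) (f k))).image
      (fun j => if _h : j < k then eflGreedy G f n j else 0))).min' h
  else 0
termination_by k
decreasing_by all_goals exact _h

noncomputable def eflUsed (G : SimpleGraph V) [DecidableRel G.Adj] (f : ℕ → V) (n k : ℕ) :
    Finset ℕ :=
  ((Finset.range k).filter (fun j => G.Adj (f j) (f k))).image (fun j => eflGreedy G f n j)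

lemma eflGreedy_spec (G : SimpleGraph V) [DecidableRel G.Adj] (f : ℕ → V) (n k : ℕ)
    (hcard : ((Finset.range k).filter (fun j => G.Adj (f j) (f k))).card < n) :
    eflGreedy G f n k < n ∧ eflGreedy G f n k ∉ eflUsed G f n k := by
  have himg : (((Finset.range k).filter (fun j => G.Adj (f j) (f k))).image
      (fun j => if _h : j < k then eflGreedy G f n j else 0)) = eflUsed G f n k := by
    apply Finset.image_congr
    intro j hj
    have : j < k := Finset.mem_range.mp (Finset.mem_filter.mp hj).1
    simp [this]
  have hne : ((Finset.range n) \ eflUsed G f n k).Nonempty := by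
    rw [Finset.sdiff_nonempty]
    intro hsub
    have h1 : (eflUsed G f n k).card ≤
        ((Finset.range k).filter (fun j => G.Adj (f j) (f k))).card :=
      Finset.card_image_le
    have h2 := Finset.card_le_card hsub
    simp only [Finset.card_range] at h2
    omega
  rw [eflGreedy, himg, dif_pos hne]
  have := Finset.min'_mem _ hne
  rw [Finset.mem_sdiff, Finset.mem_range] at this
  exact this

lemma efl_count [DecidableEq V] {n : ℕ} (A : Fin n → Finset V)
    (hint : ∀ i j, i ≠ j → (A i ∩ A j).card ≤ 1)
    (S : Finset V) (d : ℕ)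
    (hS : ∀ v ∈ S, d ≤ (Finset.univ.filter (fun j => v ∈ A j)).card) :
    S.card * (d * (d - 1)) ≤ n * (n - 1) := by
  classical
  set D : V → Finset (Fin n) := fun v => Finset.univ.filter (fun j => v ∈ A j) with hD
  have hdisj : ∀ u ∈ S, ∀ w ∈ S, u ≠ w → Disjoint ((D u).offDiag) ((D w).offDiag) := by
    intro u _ w _ huw
    rw [Finset.disjoint_left]
    intro p hpu hpw
    rw [Finset.mem_offDiag] at hpu hpw
    have h1 : u ∈ A p.1 ∩ A p.2 := Finset.mem_inter.mpr
      ⟨(Finset.mem_filter.mp hpu.1).2, (Finset.mem_filter.mp hpu.2.1).2⟩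
    have h2 : w ∈ A p.1 ∩ A p.2 := Finset.mem_inter.mpr
      ⟨(Finset.mem_filter.mp hpw.1).2, (Finset.mem_filter.mp hpw.2.1).2⟩
    exact huw (Finset.card_le_one.mp (hint p.1 p.2 hpu.2.2) u h1 w h2)
  have hsum : ∑ v ∈ S, ((D v).offDiag).card ≤
      ((Finset.univ : Finset (Fin n)).offDiag).card := by
    rw [← Finset.card_biUnion hdisj]
    apply Finset.card_le_card
    intro p hp
    simp only [Finset.mem_biUnion] at hp
    obtain ⟨v, -, hv⟩ := hp
    rw [Finset.mem_offDiag] at hv ⊢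
    exact ⟨Finset.mem_univ _, Finset.mem_univ _, hv.2.2⟩
  have huniv : ((Finset.univ : Finset (Fin n)).offDiag).card = n * (n - 1) := by
    rw [Finset.offDiag_card]
    simp only [Finset.card_univ, Fintype.card_fin]
    cases n with
    | zero => simp
    | succ m =>
      have h1 : (m + 1) * (m + 1) = (m + 1) * m + (m + 1) := by ring
      have h2 : (m + 1) * (m + 1 - 1) = (m + 1) * m := by norm_num
      omega
  have hlow : S.card * (d * (d - 1)) ≤ ∑ v ∈ S, ((D v).offDiag).card := by
    have := Finset.card_nsmul_le_sum S (fun v => ((D v).offDiag).card) (d * (d - 1)) ?_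
    · simpa [smul_eq_mul] using this
    · intro v hv
      show d * (d - 1) ≤ ((D v).offDiag).card
      rw [Finset.offDiag_card]
      have hdv : d ≤ (D v).card := hS v hv
      have h1 : d * (d - 1) ≤ (D v).card * ((D v).card - 1) :=
        Nat.mul_le_mul hdv (Nat.sub_le_sub_right hdv 1)
      have h2 : (D v).card * ((D v).card - 1) = (D v).card * (D v).card - (D v).card := by
        cases h : (D v).card with
        | zero => simp
        | succ m =>
          have : (m + 1) * (m + 1) = (m + 1) * m + (m + 1) := by ring
          simp only [Nat.succ_sub_one]
          omega
      omega
  omega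

lemma efl_inj {α : Type*} (s : Finset α) (t : Finset ℕ) (h : s.card ≤ t.card) :
    ∃ g : α → ℕ, Set.InjOn g ↑s ∧ ∀ a ∈ s, g a ∈ t := by
  have hle : (↑s : Set α).encard ≤ (↑t : Set ℕ).encard := by
    rw [Set.encard_coe_eq_coe_finsetCard, Set.encard_coe_eq_coe_finsetCard]
    exact_mod_cast h
  obtain ⟨g, h1, h2⟩ := Set.Finite.exists_injOn_of_encard_le s.finite_toSet hle
  exact ⟨g, h2, fun a ha => h1 (by exact_mod_cast ha)⟩

end EFLAux

/-- **EFL for graphs, √n bound (Hegde–Dara, Theorem 1).**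
If `G` is the union of `n` complete graphs `A 0, …, A (n-1)`, each on exactly `n`
vertices, any two sharing at most one vertex, and every `A i` has at most `√n`
vertices of clique degree greater than `1`, then `G` is `n`-colorable. -/
theorem efl_sqrt_bound {V : Type*} [DecidableEq V] (n : ℕ) (hn : 1 ≤ n)
    (A : Fin n → Finset V)
    (hcard : ∀ i, (A i).card = n)
    (hint : ∀ i j, i ≠ j → (A i ∩ A j).card ≤ 1)
    (G : SimpleGraph V)
    (hG : ∀ u v, G.Adj u v ↔ u ≠ v ∧ ∃ i, u ∈ A i ∧ v ∈ A i)
    (hsqrt : ∀ i, (((A i).filter (fun v =>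
        1 < (Finset.univ.filter (fun j => v ∈ A j)).card)).card : ℝ) ≤ Real.sqrt n) :
    G.Colorable n := by
  classical
  suffices hC : ∃ C : V → ℕ, (∀ v, C v < n) ∧ ∀ u v, G.Adj u v → C u ≠ C v by
    obtain ⟨C, hC1, hC2⟩ := hC
    exact ⟨SimpleGraph.Coloring.mk (fun v => (⟨C v, hC1 v⟩ : Fin n))
      (fun {u v} h => by simp only [ne_eq, Fin.mk.injEq]; exact hC2 u v h)⟩
  rcases isEmpty_or_nonempty V with hV | hV
  · exact ⟨fun v => isEmptyElim v, fun v => isEmptyElim v, fun u => isEmptyElim u⟩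
  obtain ⟨v₀⟩ := hV
  haveI : DecidableRel G.Adj := Classical.decRel _
  set deg : V → ℕ := fun v => (Finset.univ.filter (fun j => v ∈ A j)).card with hdeg
  set Vfin : Finset V := Finset.univ.biUnion A with hVfin
  have hmemVfin : ∀ v i, v ∈ A i → v ∈ Vfin := by
    intro v i hv
    exact Finset.mem_biUnion.mpr ⟨i, Finset.mem_univ _, hv⟩
  have hdegpos : ∀ v, 0 < deg v → ∃ i, v ∈ A i := by
    intro v hv
    obtain ⟨i, hi⟩ := Finset.card_pos.mp hv
    exact ⟨i, (Finset.mem_filter.mp hi).2⟩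
  set Hs : Finset V := Vfin.filter (fun v => 1 < deg v) with hHs
  have hH : ∀ v, v ∈ Hs ↔ 1 < deg v := by
    intro v
    constructor
    · exact fun h => (Finset.mem_filter.mp h).2
    · intro h
      obtain ⟨i, hi⟩ := hdegpos v (by omega)
      exact Finset.mem_filter.mpr ⟨hmemVfin v i hi, h⟩
  set s : ℕ := Nat.sqrt n with hsdef
  have hhi : ∀ i, ((A i).filter (fun v => 1 < deg v)).card ≤ s := by
    intro i
    have h1 := hsqrt i
    set c : ℕ := ((A i).filter (fun v => 1 < deg v)).card with hc
    have h2 : (c : ℝ) * c ≤ Real.sqrt n * Real.sqrt n := by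
      apply mul_le_mul h1 h1 (by positivity) (Real.sqrt_nonneg _)
    rw [Real.mul_self_sqrt (by positivity)] at h2
    have h3 : c * c ≤ n := by exact_mod_cast h2
    exact Nat.le_sqrt.mpr h3
  -- enumeration of Hs sorted by decreasing degree
  set l : List V := Hs.toList.mergeSort (fun u v => decide (deg v ≤ deg u)) with hl
  have hperm : l.Perm Hs.toList := List.mergeSort_perm _ _
  have hnodup : l.Nodup := hperm.symm.nodup (Finset.nodup_toList Hs)
  have hlen : l.length = Hs.card := by rw [hperm.length_eq, Finset.length_toList]
  have hsorted : List.Pairwise (fun u v => decide (deg v ≤ deg u) = true) l := by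
    apply List.pairwise_mergeSort
    · intro a b c hab hbc
      simp only [decide_eq_true_eq] at *
      omega
    · intro a b
      simp only [Bool.or_eq_true, decide_eq_true_eq]
      omega
  set f : ℕ → V := fun k => l.getD k v₀ with hf
  have hfget : ∀ k (hk : k < l.length), f k = l.get ⟨k, hk⟩ := by
    intro k hk
    simp [hf, List.getD, List.getElem?_eq_getElem hk, List.get_eq_getElem]
  have hfmem : ∀ k, k < l.length → f k ∈ Hs := by
    intro k hk
    rw [hfget k hk]
    have : l.get ⟨k, hk⟩ ∈ l := l.get_mem ⟨k, hk⟩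
    rw [hperm.mem_iff, Finset.mem_toList] at this
    exact this
  have hfinj : ∀ j k, j < l.length → k < l.length → f j = f k → j = k := by
    intro j k hj hk hjk
    rw [hfget j hj, hfget k hk] at hjk
    simpa using hnodup.getElem_inj_iff.mp (by simpa using hjk)
  have hfsort : ∀ j k, j < k → (hk : k < l.length) → deg (f k) ≤ deg (f j) := by
    intro j k hjk hk
    have hj : j < l.length := lt_trans hjk hk
    rw [hfget j hj, hfget k hk]
    have hsorted' : List.Pairwise (fun u v => decide (deg v ≤ deg u) = true) l := hsorted
    have := hsorted'.rel_get_of_lt (a := ⟨j, hj⟩) (b := ⟨k, hk⟩) (by simpa using hjk)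
    simpa using this
  have hidx : ∀ v ∈ Hs, l.idxOf v < l.length ∧ f (l.idxOf v) = v := by
    intro v hv
    have hvl : v ∈ l := by rw [hperm.mem_iff, Finset.mem_toList]; exact hv
    have h1 : l.idxOf v < l.length := List.idxOf_lt_length_iff.mpr hvl
    exact ⟨h1, by rw [hfget _ h1]; exact List.idxOf_get h1⟩
  -- key counting bound for greedy
  have hkey : ∀ k, k < l.length →
      ((Finset.range k).filter (fun j => G.Adj (f j) (f k))).card < n := by
    intro k hk
    have hvH : f k ∈ Hs := hfmem k hk
    set v : V := f k with hv
    set d : ℕ := deg v with hd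
    have hd2 : 2 ≤ d := (hH v).mp hvH
    set W : Finset V := Hs.filter (fun u => G.Adj u v ∧ d ≤ deg u) with hW
    have hmapsto : ((Finset.range k).filter (fun j => G.Adj (f j) v)).card ≤ W.card := by
      apply Finset.card_le_card_of_injOn f
      · intro j hj
        simp only [Finset.mem_coe, Finset.mem_filter, Finset.mem_range] at hj
        obtain ⟨hjk, hadj⟩ := hj
        have hjlen : j < l.length := lt_trans hjk hk
        exact Finset.mem_filter.mpr ⟨hfmem j hjlen, hadj, hfsort j k hjk hk⟩
      · intro a ha b hb hab
        simp only [Finset.mem_coe, Finset.mem_filter, Finset.mem_range] at ha hb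
        exact hfinj a b (lt_trans ha.1 hk) (lt_trans hb.1 hk) hab
    have hvW : v ∉ W := by
      intro h
      exact G.irrefl ((Finset.mem_filter.mp h).2.1)
    rcases le_or_gt n (d * (d - 1)) with hcase | hcase
    · -- large degree: few vertices of degree ≥ d
      have hsub : insert v W ⊆ Vfin.filter (fun u => d ≤ deg u) := by
        intro u hu
        rcases Finset.mem_insert.mp hu with rfl | hu
        · exact Finset.mem_filter.mpr ⟨(Finset.mem_filter.mp hvH).1, le_refl _⟩
        · exact Finset.mem_filter.mpr
            ⟨(Finset.mem_filter.mp (Finset.mem_filter.mp hu).1).1,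
             (Finset.mem_filter.mp hu).2.2⟩
      have hc1 : W.card + 1 ≤ (Vfin.filter (fun u => d ≤ deg u)).card := by
        rw [← Finset.card_insert_of_notMem hvW]
        exact Finset.card_le_card hsub
      have hc2 := efl_count A hint (Vfin.filter (fun u => d ≤ deg u)) d
        (fun u hu => (Finset.mem_filter.mp hu).2)
      have hc3 : (W.card + 1) * n ≤ n * (n - 1) :=
        le_trans (Nat.mul_le_mul hc1 hcase) hc2
      have hc4 : n * n = n * (n - 1) + n := by
        obtain ⟨m, rfl⟩ : ∃ m, n = m + 1 := ⟨n - 1, by omega⟩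
        simp only [Nat.add_sub_cancel]
        ring
      have hc5 : W.card + 1 < n := by
        by_contra hcon
        push_neg at hcon
        have h6 : n * n ≤ (W.card + 1) * n := Nat.mul_le_mul hcon (le_refl n)
        have h7 : (W.card + 1) * n = W.card * n + n := by ring
        omega
      omega
    · -- small degree: at most d (√n - 1) high neighbours
      have hsub : W ⊆ (Finset.univ.filter (fun j => v ∈ A j)).biUnion
          (fun i => ((A i).filter (fun u => 1 < deg u)).erase v) := by
        intro u hu
        obtain ⟨huH, hadj, -⟩ := Finset.mem_filter.mp hu
        obtain ⟨hne, i, hui, hvi⟩ := (hG u v).mp hadj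
        exact Finset.mem_biUnion.mpr ⟨i, Finset.mem_filter.mpr ⟨Finset.mem_univ _, hvi⟩,
          Finset.mem_erase.mpr ⟨hne, Finset.mem_filter.mpr ⟨hui, (hH u).mp huH⟩⟩⟩
      have hWle : W.card ≤ d * (s - 1) := by
        calc W.card ≤ ∑ i ∈ (Finset.univ.filter (fun j => v ∈ A j)),
              (((A i).filter (fun u => 1 < deg u)).erase v).card :=
              le_trans (Finset.card_le_card hsub) Finset.card_biUnion_le
          _ ≤ ∑ _i ∈ (Finset.univ.filter (fun j => v ∈ A j)), (s - 1) := by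
              apply Finset.sum_le_sum
              intro i hi
              have hvin : v ∈ (A i).filter (fun u => 1 < deg u) :=
                Finset.mem_filter.mpr ⟨(Finset.mem_filter.mp hi).2, by omega⟩
              have h1 := Finset.card_erase_of_mem hvin
              have h2 := hhi i
              omega
          _ = d * (s - 1) := by
              rw [Finset.sum_const, smul_eq_mul]
      have hds : d ≤ s + 1 := by
        have h1 : (d - 1) * (d - 1) ≤ d * (d - 1) :=
          Nat.mul_le_mul_right _ (Nat.sub_le d 1)
        have h2 : d - 1 ≤ s := Nat.le_sqrt.mpr (by omega)
        omega
      have hs1 : 1 ≤ s := Nat.le_sqrt.mpr (by omega)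
      have hss : s * s ≤ n := by
        have h := Nat.sqrt_le' n; rw [pow_two] at h; exact h
      have hfin : d * (s - 1) < n := by
        have h3 : d * (s - 1) ≤ (s + 1) * (s - 1) := Nat.mul_le_mul_right _ hds
        have h4 : (s + 1) * (s - 1) + 1 ≤ s * s := by
          obtain ⟨t, ht⟩ : ∃ t, s = t + 1 := ⟨s - 1, by omega⟩
          rw [ht]
          have h5 : (t + 1 + 1) * (t + 1 - 1) = t * t + 2 * t := by
            simp only [Nat.add_sub_cancel]
            ring
          have h6 : (t + 1) * (t + 1) = t * t + 2 * t + 1 := by ring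
          omega
        omega
      omega
  -- greedy coloring of high vertices
  have hgl : ∀ k, k < l.length → eflGreedy G f n k < n :=
    fun k hk => (eflGreedy_spec G f n k (hkey k hk)).1
  have hgne : ∀ j k, j < k → k < l.length → G.Adj (f j) (f k) →
      eflGreedy G f n j ≠ eflGreedy G f n k := by
    intro j k hjk hk hadj heq
    apply (eflGreedy_spec G f n k (hkey k hk)).2
    rw [← heq]
    exact Finset.mem_image_of_mem _
      (Finset.mem_filter.mpr ⟨Finset.mem_range.mpr hjk, hadj⟩)
  set chigh : V → ℕ := fun v => eflGreedy G f n (l.idxOf v) with hchigh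
  -- injections for low vertices of each clique
  have hexg : ∀ i : Fin n, ∃ g : V → ℕ,
      Set.InjOn g ↑((A i).filter (fun v => ¬ 1 < deg v)) ∧
      ∀ a ∈ (A i).filter (fun v => ¬ 1 < deg v),
        g a ∈ (Finset.range n) \ (((A i).filter (fun u => 1 < deg u)).image chigh) := by
    intro i
    apply efl_inj
    have h1 : ((A i).filter (fun u => 1 < deg u)).card
        + ((A i).filter (fun v => ¬ 1 < deg v)).card = n := by
      rw [Finset.card_filter_add_card_filter_not, hcard i]
    have h2 : (Finset.range n).card - (((A i).filter (fun u => 1 < deg u)).image chigh).card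
        ≤ ((Finset.range n) \ (((A i).filter (fun u => 1 < deg u)).image chigh)).card :=
      Finset.le_card_sdiff _ _
    have h3 : (((A i).filter (fun u => 1 < deg u)).image chigh).card
        ≤ ((A i).filter (fun u => 1 < deg u)).card := Finset.card_image_le
    simp only [Finset.card_range] at h2
    omega
  choose g hg1 hg2 using hexg
  -- uniqueness of clique for low vertices
  have huniq : ∀ v, ¬ 1 < deg v → ∀ i j : Fin n, v ∈ A i → v ∈ A j → i = j := by
    intro v hv i j hi hj
    have h1 : deg v ≤ 1 := by omega
    exact Finset.card_le_one.mp h1 i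
      (Finset.mem_filter.mpr ⟨Finset.mem_univ _, hi⟩) j
      (Finset.mem_filter.mpr ⟨Finset.mem_univ _, hj⟩)
  set C : V → ℕ := fun v =>
    if 1 < deg v then chigh v
    else if hv2 : ∃ i, v ∈ A i then g hv2.choose v
    else 0 with hCdef
  have hChigh : ∀ v, 1 < deg v → C v = chigh v := by
    intro v hv; simp [hCdef, hv]
  have hClow : ∀ v (hv : ¬ 1 < deg v) (i : Fin n), v ∈ A i → C v = g i v := by
    intro v hv i hi
    have hex : ∃ j, v ∈ A j := ⟨i, hi⟩
    have : hex.choose = i := huniq v hv _ _ hex.choose_spec hi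
    simp [hCdef, hv, hex, this]
  refine ⟨C, ?_, ?_⟩
  · intro v
    by_cases hv : 1 < deg v
    · rw [hChigh v hv]
      have hvH : v ∈ Hs := (hH v).mpr hv
      obtain ⟨hidx1, -⟩ := hidx v hvH
      exact hgl _ hidx1
    · by_cases hv2 : ∃ i, v ∈ A i
      · obtain ⟨i, hi⟩ := hv2
        rw [hClow v hv i hi]
        have := hg2 i v (Finset.mem_filter.mpr ⟨hi, hv⟩)
        rw [Finset.mem_sdiff, Finset.mem_range] at this
        exact this.1
      · simp [hCdef, hv, hv2]
        omega
  · intro u v hadj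
    obtain ⟨hne, i, hui, hvi⟩ := (hG u v).mp hadj
    by_cases hu : 1 < deg u <;> by_cases hvd : 1 < deg v
    · -- both high
      rw [hChigh u hu, hChigh v hvd]
      have huH : u ∈ Hs := (hH u).mpr hu
      have hvH : v ∈ Hs := (hH v).mpr hvd
      obtain ⟨hju, hfu⟩ := hidx u huH
      obtain ⟨hjv, hfv⟩ := hidx v hvH
      have hneidx : l.idxOf u ≠ l.idxOf v := by
        intro h
        exact hne (by rw [← hfu, h, hfv])
      rcases lt_or_gt_of_ne hneidx with h | h
      · exact hgne _ _ h hjv (by rw [hfu, hfv]; exact hadj)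
      · exact (hgne _ _ h hju (by rw [hfu, hfv]; exact hadj.symm)).symm
    · -- u high, v low
      rw [hChigh u hu, hClow v hvd i hvi]
      intro heq
      have h1 := hg2 i v (Finset.mem_filter.mpr ⟨hvi, hvd⟩)
      rw [Finset.mem_sdiff] at h1
      apply h1.2
      rw [← heq]
      exact Finset.mem_image_of_mem chigh (Finset.mem_filter.mpr ⟨hui, hu⟩)
    · -- u low, v high
      rw [hChigh v hvd, hClow u hu i hui]
      intro heq
      have h1 := hg2 i u (Finset.mem_filter.mpr ⟨hui, hu⟩)
      rw [Finset.mem_sdiff] at h1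
      apply h1.2
      rw [heq]
      exact Finset.mem_image_of_mem chigh (Finset.mem_filter.mpr ⟨hvi, hvd⟩)
    · -- both low
      rw [hClow u hu i hui, hClow v hvd i hvi]
      intro heq
      exact hne (hg1 i (by simp only [Finset.coe_filter]; exact ⟨hui, hu⟩)
        (by simp only [Finset.coe_filter]; exact ⟨hvi, hvd⟩) heq)
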